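/- Let E be a Banach space and let (𝒯(t))_{t≥0} be a τ_sot-bi-continuous semigroup on the Banach space 𝓛(E) with generator (𝒜,dom(𝒜)). Then the following are equivalent: (i) dom(𝒜) is a right ideal of 𝓛(E) and 𝒜 is a right 𝓛(E)-module homomorphism, i.e., C ∈ dom(𝒜) and B ∈ 𝓛(E) imply C∘B ∈ dom(𝒜) and 𝒜(C∘B) = 𝒜(C)∘B; (ii) the semigroup (𝒯(t)) is left implemented, i.e., there exists a C₀-semigroup (S(t))_{t≥0} on E such that 𝒯(t)C = S(t)∘C for all t ≥ 0 and C ∈ 𝓛(E). In this case S(t) = 𝒯(t)(Id). -/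

import Mathlib

open Set Filter Topology

variable {E : Type*} [NormedAddCommGroup E] [NormedSpace ℝ E]

/-- A `C₀`-semigroup on a Banach space `E`. -/
structure IsC0Semigroup (T : ℝ → E →L[ℝ] E) : Prop where
  map_zero : T 0 = 1
  map_add : ∀ s t : ℝ, 0 ≤ s → 0 ≤ t → T (s + t) = (T s).comp (T t)
  strongCont : ∀ x : E, ContinuousOn (fun t => T t x) (Ici (0:ℝ))

/-- A `τ_sot`-bi-continuous semigroup on `𝓛(E)`. -/
structure IsBiContSotSemigroup (U : ℝ → (E →L[ℝ] E) →L[ℝ] (E →L[ℝ] E)) : Prop where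
  map_zero : U 0 = 1
  map_add : ∀ s t : ℝ, 0 ≤ s → 0 ≤ t → U (s + t) = (U s).comp (U t)
  strongCont : ∀ (C : E →L[ℝ] E) (x : E), ContinuousOn (fun t => (U t C) x) (Ici (0:ℝ))
  expBound : ∃ M : ℝ, 1 ≤ M ∧ ∃ ω : ℝ, ∀ t : ℝ, 0 ≤ t → ‖U t‖ ≤ M * Real.exp (ω * t)
  biequi : ∀ t₀ : ℝ, 0 < t₀ → ∀ u : ℕ → E →L[ℝ] E, (∃ c : ℝ, ∀ n, ‖u n‖ ≤ c) →
    (∀ x : E, Tendsto (fun n => u n x) atTop (nhds (0:E))) →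
    ∀ x : E, ∀ ε > (0:ℝ), ∃ N : ℕ, ∀ n ≥ N, ∀ t ∈ Icc (0:ℝ) t₀, ‖(U t (u n)) x‖ < ε

/-- The generator relation of a `τ_sot`-bi-continuous semigroup on `𝓛(E)`:
`Y = 𝒜 C` iff the difference quotients converge strongly and are norm-bounded. -/
def SotGenRel (U : ℝ → (E →L[ℝ] E) →L[ℝ] (E →L[ℝ] E)) (C Y : E →L[ℝ] E) : Prop :=
  (∀ x : E, Tendsto (fun t : ℝ => t⁻¹ • ((U t C) x - C x)) (nhdsWithin 0 (Ioi 0)) (nhds (Y x))) ∧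
    ∃ M : ℝ, ∀ t ∈ Ioc (0:ℝ) 1, ‖U t C - C‖ ≤ M * t

section Aux

variable {𝒯 : ℝ → (E →L[ℝ] E) →L[ℝ] (E →L[ℝ] E)}

/-- Local uniform norm bound on the semigroup. -/
lemma aux_norm_bound (h𝒯 : IsBiContSotSemigroup 𝒯) (t₀ : ℝ) :
    ∃ K : ℝ, 1 ≤ K ∧ ∀ s ∈ Icc (0:ℝ) t₀, ‖𝒯 s‖ ≤ K := by
  obtain ⟨M, hM, ω, hb⟩ := h𝒯.expBound
  have he : (1:ℝ) ≤ Real.exp (|ω| * max t₀ 0) :=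
    Real.one_le_exp (by positivity)
  refine ⟨M * Real.exp (|ω| * max t₀ 0), by nlinarith, fun s hs => ?_⟩
  have h1 := hb s hs.1
  have h2 : Real.exp (ω * s) ≤ Real.exp (|ω| * max t₀ 0) := by
    apply Real.exp_le_exp.2
    have : ω * s ≤ |ω| * s := mul_le_mul_of_nonneg_right (le_abs_self ω) hs.1
    have : |ω| * s ≤ |ω| * max t₀ 0 :=
      mul_le_mul_of_nonneg_left (le_trans hs.2 (le_max_left _ _)) (abs_nonneg ω)
    linarith
  calc ‖𝒯 s‖ ≤ M * Real.exp (ω * s) := h1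
  _ ≤ M * Real.exp (|ω| * max t₀ 0) := by nlinarith [Real.exp_pos (ω * s)]

/-- Workhorse: bi-equicontinuity for sequences, with eventual hypotheses. -/
lemma aux_biequi_seq (h𝒯 : IsBiContSotSemigroup 𝒯) {t₀ : ℝ} (ht₀ : 0 < t₀)
    {v : ℕ → E →L[ℝ] E} {c : ℝ} (hb : ∀ᶠ n in atTop, ‖v n‖ ≤ c)
    (hnull : ∀ x : E, Tendsto (fun n => v n x) atTop (𝓝 0))
    {τ : ℕ → ℝ} (hτ : ∀ᶠ n in atTop, τ n ∈ Icc (0:ℝ) t₀) (x : E) :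
    Tendsto (fun n => (𝒯 (τ n)) (v n) x) atTop (𝓝 0) := by
  obtain ⟨N₁, hN₁⟩ := eventually_atTop.1 hb
  obtain ⟨N₂, hN₂⟩ := eventually_atTop.1 hτ
  set w : ℕ → E →L[ℝ] E := fun n => if N₁ ≤ n then v n else 0 with hw
  have hwb : ∃ c', ∀ n, ‖w n‖ ≤ c' := by
    refine ⟨max c 0, fun n => ?_⟩
    by_cases h : N₁ ≤ n
    · simp only [hw, if_pos h]; exact le_max_of_le_left (hN₁ n h)
    · simp only [hw, if_neg h, norm_zero]; exact le_max_right _ _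
  have hwnull : ∀ y : E, Tendsto (fun n => w n y) atTop (𝓝 0) := by
    intro y
    refine (hnull y).congr' ?_
    filter_upwards [eventually_ge_atTop N₁] with n hn
    simp only [hw, if_pos hn]
  rw [Metric.tendsto_atTop]
  intro ε hε
  obtain ⟨N₃, hN₃⟩ := h𝒯.biequi t₀ ht₀ w hwb hwnull x ε hε
  refine ⟨max N₁ (max N₂ N₃), fun n hn => ?_⟩
  have h1 : N₁ ≤ n := le_trans (le_max_left _ _) hn
  have h2 : N₂ ≤ n := le_trans (le_trans (le_max_left _ _) (le_max_right N₁ _)) hn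
  have h3 : N₃ ≤ n := le_trans (le_trans (le_max_right _ _) (le_max_right N₁ _)) hn
  have hwv : w n = v n := if_pos h1
  rw [dist_zero_right, ← hwv]
  exact hN₃ n h3 (τ n) (hN₂ n h2)

/-- Strong continuity in time, sequential form. -/
lemma aux_time_cont (h𝒯 : IsBiContSotSemigroup 𝒯) (D : E →L[ℝ] E) (x : E)
    {τ : ℕ → ℝ} {s : ℝ} (hs : 0 ≤ s) (hτ : ∀ᶠ n in atTop, 0 ≤ τ n)
    (hlim : Tendsto τ atTop (𝓝 s)) :
    Tendsto (fun n => 𝒯 (τ n) D x) atTop (𝓝 (𝒯 s D x)) := by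
  have h1 : Tendsto τ atTop (𝓝[Ici 0] s) :=
    tendsto_nhdsWithin_iff.2 ⟨hlim, hτ⟩
  exact Filter.Tendsto.comp ((h𝒯.strongCont D x).continuousWithinAt (mem_Ici.2 hs)) h1

/-- Combined limit lemma: `𝒯 (τ n) (A n) x → 𝒯 s W x` for bounded sot-convergent data. -/
lemma aux_seq_lim (h𝒯 : IsBiContSotSemigroup 𝒯) {t₀ : ℝ} (ht₀ : 0 < t₀)
    {A : ℕ → E →L[ℝ] E} {W : E →L[ℝ] E} {c : ℝ}
    (hb : ∀ᶠ n in atTop, ‖A n - W‖ ≤ c)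
    (hnull : ∀ y : E, Tendsto (fun n => A n y - W y) atTop (𝓝 0))
    {τ : ℕ → ℝ} {s : ℝ} (hs : 0 ≤ s) (hτ : ∀ᶠ n in atTop, τ n ∈ Icc (0:ℝ) t₀)
    (hlim : Tendsto τ atTop (𝓝 s)) (x : E) :
    Tendsto (fun n => 𝒯 (τ n) (A n) x) atTop (𝓝 (𝒯 s W x)) := by
  have h1 : Tendsto (fun n => 𝒯 (τ n) (A n - W) x) atTop (𝓝 0) :=
    aux_biequi_seq h𝒯 ht₀ hb (fun y => by
      simpa only [ContinuousLinearMap.sub_apply] using hnull y) hτ x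
  have h2 := aux_time_cont h𝒯 W x hs (hτ.mono fun n hn => hn.1) hlim
  have h3 := h1.add h2
  rw [zero_add] at h3
  refine h3.congr fun n => ?_
  simp only [map_sub, ContinuousLinearMap.sub_apply]
  abel

lemma aux_T_add (h𝒯 : IsBiContSotSemigroup 𝒯) {s t : ℝ} (hs : 0 ≤ s) (ht : 0 ≤ t)
    (C : E →L[ℝ] E) : 𝒯 (s + t) C = 𝒯 s (𝒯 t C) := by
  rw [h𝒯.map_add s t hs ht]; rfl

lemma aux_quot_bound {C Y : E →L[ℝ] E} (hC : SotGenRel 𝒯 C Y) :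
    ∃ M : ℝ, ∀ t ∈ Ioc (0:ℝ) 1, ‖t⁻¹ • (𝒯 t C - C)‖ ≤ M := by
  obtain ⟨M, hM⟩ := hC.2
  refine ⟨M, fun t ht => ?_⟩
  have hns : ‖t⁻¹ • (𝒯 t C - C)‖ = |t⁻¹| * ‖𝒯 t C - C‖ := norm_smul t⁻¹ (𝒯 t C - C)
  rw [hns, abs_of_pos (inv_pos.2 ht.1)]
  calc t⁻¹ * ‖𝒯 t C - C‖ ≤ t⁻¹ * (M * t) :=
        mul_le_mul_of_nonneg_left (hM t ht) (inv_nonneg.2 ht.1.le)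
  _ = M := by field_simp [ht.1.ne']

lemma aux_genRel_smul {C Y : E →L[ℝ] E} (hC : SotGenRel 𝒯 C Y) (a : ℝ) :
    SotGenRel 𝒯 (a • C) (a • Y) := by
  constructor
  · intro x
    have h1 := (hC.1 x).const_smul a
    have h2 : ((a • Y) x) = a • (Y x) := rfl
    rw [h2]
    refine h1.congr fun t => ?_
    simp only [map_smul, ContinuousLinearMap.smul_apply, ← smul_sub]
    rw [smul_comm]
  · obtain ⟨M, hM⟩ := hC.2
    refine ⟨|a| * M, fun t ht => ?_⟩
    have h : 𝒯 t (a • C) - a • C = a • (𝒯 t C - C) := by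
      rw [map_smul, smul_sub]
    have hns : ‖a • (𝒯 t C - C)‖ = |a| * ‖𝒯 t C - C‖ := norm_smul a (𝒯 t C - C)
    rw [h, hns, mul_assoc]
    exact mul_le_mul_of_nonneg_left (hM t ht) (abs_nonneg a)

lemma aux_genRel_orbit (h𝒯 : IsBiContSotSemigroup 𝒯) {C Y : E →L[ℝ] E}
    (hC : SotGenRel 𝒯 C Y) {s : ℝ} (hs : 0 ≤ s) :
    SotGenRel 𝒯 (𝒯 s C) (𝒯 s Y) := by
  obtain ⟨M, hM⟩ := hC.2
  obtain ⟨Mq, hMq⟩ := aux_quot_bound hC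
  constructor
  · intro x
    rw [tendsto_iff_seq_tendsto]
    intro u hu
    have hu0 : Tendsto u atTop (𝓝 0) := hu.mono_right nhdsWithin_le_nhds
    have hupos : ∀ᶠ n in atTop, u n ∈ Ioi (0:ℝ) := (tendsto_nhdsWithin_iff.1 hu).2
    have hule : ∀ᶠ n in atTop, u n ∈ Ioc (0:ℝ) 1 := by
      filter_upwards [hupos, hu0.eventually_lt_const one_pos] with n h1 h2
      exact ⟨h1, h2.le⟩
    set A : ℕ → E →L[ℝ] E := fun n => (u n)⁻¹ • (𝒯 (u n) C - C) with hA
    have hmain : Tendsto (fun n => 𝒯 s (A n) x) atTop (𝓝 (𝒯 s Y x)) := by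
      refine aux_seq_lim h𝒯 (t₀ := s + 1) (by linarith) (c := Mq + ‖Y‖) ?_ ?_ hs
        (Eventually.of_forall fun n => ⟨hs, by linarith⟩) tendsto_const_nhds x
      · filter_upwards [hule] with n hn
        calc ‖A n - Y‖ ≤ ‖A n‖ + ‖Y‖ := norm_sub_le _ _
        _ ≤ Mq + ‖Y‖ := by have := hMq (u n) hn; linarith
      · intro y
        rw [← sub_self (Y y)] at *
        apply Filter.Tendsto.sub _ tendsto_const_nhds
        have h1 := (hC.1 y).comp hu
        refine h1.congr fun n => ?_
        simp only [hA, Function.comp, ContinuousLinearMap.smul_apply,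
          ContinuousLinearMap.sub_apply]
    refine hmain.congr' ?_
    filter_upwards [hupos] with n hn
    have h1 : 𝒯 (u n) (𝒯 s C) = 𝒯 s (𝒯 (u n) C) := by
      rw [← aux_T_add h𝒯 (le_of_lt hn) hs, ← aux_T_add h𝒯 hs (le_of_lt hn), add_comm]
    simp only [Function.comp, hA]
    rw [map_smul, ContinuousLinearMap.smul_apply, map_sub, ContinuousLinearMap.sub_apply, h1]
  · refine ⟨‖𝒯 s‖ * M, fun t ht => ?_⟩
    have h1 : 𝒯 t (𝒯 s C) - 𝒯 s C = 𝒯 s (𝒯 t C - C) := by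
      rw [map_sub, ← aux_T_add h𝒯 hs ht.1.le, ← aux_T_add h𝒯 ht.1.le hs, add_comm]
    rw [h1, mul_assoc]
    calc ‖𝒯 s (𝒯 t C - C)‖ ≤ ‖𝒯 s‖ * ‖𝒯 t C - C‖ := (𝒯 s).le_opNorm _
    _ ≤ ‖𝒯 s‖ * (M * t) := mul_le_mul_of_nonneg_left (hM t ht) (norm_nonneg (𝒯 s))

lemma aux_integrable (h𝒯 : IsBiContSotSemigroup 𝒯) (C : E →L[ℝ] E) (x : E)
    {a b : ℝ} (ha : 0 ≤ a) (hb : 0 ≤ b) :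
    IntervalIntegrable (fun s => 𝒯 s C x) MeasureTheory.volume a b := by
  apply ContinuousOn.intervalIntegrable
  exact (h𝒯.strongCont C x).mono fun s hs => le_trans (le_min ha hb) hs.1

/-- The averaged operator `x ↦ ∫_0^r 𝒯(s)C x ds`. -/
noncomputable def avg [CompleteSpace E] (h𝒯 : IsBiContSotSemigroup 𝒯) (C : E →L[ℝ] E)
    {r : ℝ} (hr : 0 ≤ r) : E →L[ℝ] E :=
  LinearMap.mkContinuous
    { toFun := fun x => ∫ s in (0:ℝ)..r, 𝒯 s C x
      map_add' := fun x y => by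
        simp only [map_add]
        exact intervalIntegral.integral_add (aux_integrable h𝒯 C x le_rfl hr)
          (aux_integrable h𝒯 C y le_rfl hr)
      map_smul' := fun a x => by
        simp only [map_smul, RingHom.id_apply]
        exact intervalIntegral.integral_smul a _ }
    (r * (aux_norm_bound h𝒯 r).choose * ‖C‖)
    (fun x => by
      obtain ⟨hK1, hK⟩ := (aux_norm_bound h𝒯 r).choose_spec
      set K := (aux_norm_bound h𝒯 r).choose
      have hb : ∀ s ∈ uIoc (0:ℝ) r, ‖𝒯 s C x‖ ≤ K * ‖C‖ * ‖x‖ := by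
        intro s hs
        rw [uIoc_of_le hr] at hs
        calc ‖𝒯 s C x‖ ≤ ‖𝒯 s C‖ * ‖x‖ := (𝒯 s C).le_opNorm x
        _ ≤ (‖𝒯 s‖ * ‖C‖) * ‖x‖ :=
            mul_le_mul_of_nonneg_right ((𝒯 s).le_opNorm C) (norm_nonneg x)
        _ ≤ (K * ‖C‖) * ‖x‖ := by
            gcongr
            exact hK s ⟨hs.1.le, hs.2⟩
        _ = K * ‖C‖ * ‖x‖ := by ring
      calc ‖∫ s in (0:ℝ)..r, 𝒯 s C x‖ ≤ K * ‖C‖ * ‖x‖ * |r - 0| :=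
            intervalIntegral.norm_integral_le_of_norm_le_const hb
      _ = r * K * ‖C‖ * ‖x‖ := by rw [sub_zero, abs_of_nonneg hr]; ring)

lemma avg_apply [CompleteSpace E] (h𝒯 : IsBiContSotSemigroup 𝒯) (C : E →L[ℝ] E)
    {r : ℝ} (hr : 0 ≤ r) (x : E) :
    avg h𝒯 C hr x = ∫ s in (0:ℝ)..r, 𝒯 s C x := rfl

lemma avg_norm_le [CompleteSpace E] (h𝒯 : IsBiContSotSemigroup 𝒯) (C : E →L[ℝ] E)
    {r : ℝ} (hr : 0 ≤ r) {K : ℝ} (hK0 : 0 ≤ K)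
    (hK : ∀ s ∈ Icc (0:ℝ) r, ‖𝒯 s‖ ≤ K) :
    ‖avg h𝒯 C hr‖ ≤ r * K * ‖C‖ := by
  apply ContinuousLinearMap.opNorm_le_bound _ (by positivity)
  intro x
  rw [avg_apply]
  have hb : ∀ s ∈ uIoc (0:ℝ) r, ‖𝒯 s C x‖ ≤ K * ‖C‖ * ‖x‖ := by
    intro s hs
    rw [uIoc_of_le hr] at hs
    calc ‖𝒯 s C x‖ ≤ ‖𝒯 s C‖ * ‖x‖ := (𝒯 s C).le_opNorm x
    _ ≤ (‖𝒯 s‖ * ‖C‖) * ‖x‖ :=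
        mul_le_mul_of_nonneg_right ((𝒯 s).le_opNorm C) (norm_nonneg x)
    _ ≤ K * ‖C‖ * ‖x‖ := by
        gcongr
        exact hK s ⟨hs.1.le, hs.2⟩
  calc ‖∫ s in (0:ℝ)..r, 𝒯 s C x‖ ≤ K * ‖C‖ * ‖x‖ * |r - 0| :=
        intervalIntegral.norm_integral_le_of_norm_le_const hb
  _ = r * K * ‖C‖ * ‖x‖ := by rw [sub_zero, abs_of_nonneg hr]; ring

/-- Riemann sums of a continuous function converge to the integral. -/
lemma aux_riemann [CompleteSpace E] {f : ℝ → E} {r : ℝ} (hr : 0 < r)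
    (hf : ContinuousOn f (Icc 0 r)) :
    Tendsto (fun n : ℕ => (r / (n+1)) • ∑ i ∈ Finset.range (n+1), f (i * (r / (n+1))))
      atTop (𝓝 (∫ s in (0:ℝ)..r, f s)) := by
  have hunif := (isCompact_Icc (a := (0:ℝ)) (b := r)).uniformContinuousOn_of_continuous hf
  rw [Metric.uniformContinuousOn_iff] at hunif
  rw [Metric.tendsto_atTop]
  intro ε hε
  obtain ⟨δ, hδ, hδ'⟩ := hunif (ε / (2*r)) (by positivity)
  obtain ⟨N, hN⟩ := exists_nat_gt (r / δ)
  refine ⟨N, fun n hn => ?_⟩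
  set h : ℝ := r / (n+1) with hh
  have hn1 : (0:ℝ) < (n:ℝ) + 1 := by positivity
  have hhpos : 0 < h := by positivity
  have hr' : ((n:ℝ)+1) * h = r := by rw [hh]; field_simp
  have hhδ : h < δ := by
    rw [hh, div_lt_iff₀ hn1]
    have h1 : r / δ < (n:ℝ) + 1 := by
      have : (N:ℝ) ≤ (n:ℝ) := Nat.cast_le.2 hn
      linarith
    calc r = (r / δ) * δ := by field_simp
    _ < ((n:ℝ)+1) * δ := by
        apply mul_lt_mul_of_pos_right h1 hδ
    _ = δ * ((n:ℝ)+1) := by ring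
  set a : ℕ → ℝ := fun i => i * h with ha
  have hstep : ∀ i : ℕ, a (i+1) - a i = h := by
    intro i; simp only [ha]; push_cast; ring
  have hmem : ∀ i : ℕ, i ≤ n + 1 → a i ∈ Icc (0:ℝ) r := by
    intro i hi
    constructor
    · simp only [ha]; positivity
    · simp only [ha]
      calc (i:ℝ) * h ≤ ((n:ℝ)+1) * h := by
            apply mul_le_mul_of_nonneg_right _ hhpos.le
            exact_mod_cast hi
      _ = r := hr'
  have hsub : ∀ i : ℕ, i < n + 1 → Icc (a i) (a (i+1)) ⊆ Icc (0:ℝ) r := by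
    intro i hi s hs
    exact ⟨le_trans (hmem i (by omega)).1 hs.1, le_trans hs.2 (hmem (i+1) (by omega)).2⟩
  have hle : ∀ i : ℕ, a i ≤ a (i+1) := by
    intro i; have := hstep i; linarith
  have hint : ∀ i : ℕ, i < n + 1 → IntervalIntegrable f MeasureTheory.volume (a i) (a (i+1)) := by
    intro i hi
    apply ContinuousOn.intervalIntegrable
    apply hf.mono
    rw [uIcc_of_le (hle i)]
    exact hsub i hi
  have ha0 : a 0 = 0 := by simp [ha]
  have han : a (n+1) = r := by
    simp only [ha]; push_cast; exact hr'
  have hsplit : ∑ i ∈ Finset.range (n+1), ∫ s in (a i)..(a (i+1)), f s = ∫ s in (0:ℝ)..r, f s := by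
    rw [intervalIntegral.sum_integral_adjacent_intervals (fun k hk => hint k hk), ha0, han]
  have hsum : (r / (n+1)) • ∑ i ∈ Finset.range (n+1), f (a i)
      = ∑ i ∈ Finset.range (n+1), h • f (a i) := by
    rw [Finset.smul_sum]
  have hdiff : ∀ i : ℕ, i < n + 1 →
      ‖h • f (a i) - ∫ s in (a i)..(a (i+1)), f s‖ ≤ (ε / (2*r)) * h := by
    intro i hi
    have hconst : h • f (a i) = ∫ _ in (a i)..(a (i+1)), f (a i) := by
      rw [intervalIntegral.integral_const, hstep i]
    rw [hconst, ← intervalIntegral.integral_sub intervalIntegrable_const (hint i hi)]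
    have hb : ∀ s ∈ uIoc (a i) (a (i+1)), ‖f (a i) - f s‖ ≤ ε / (2*r) := by
      intro s hs
      rw [uIoc_of_le (hle i)] at hs
      have hsmem : s ∈ Icc (0:ℝ) r := hsub i hi ⟨hs.1.le, hs.2⟩
      have hdist : dist (a i) s < δ := by
        rw [Real.dist_eq, abs_of_nonpos (by linarith [hs.1])]
        have := hstep i
        have := hs.2
        linarith [hhδ]
      have := hδ' (a i) (hmem i (by omega)) s hsmem hdist
      rw [dist_eq_norm] at this
      exact this.le
    calc ‖∫ s in (a i)..(a (i+1)), (f (a i) - f s)‖ ≤ (ε / (2*r)) * |a (i+1) - a i| :=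
          intervalIntegral.norm_integral_le_of_norm_le_const hb
    _ = (ε / (2*r)) * h := by rw [hstep i, abs_of_pos hhpos]
  rw [dist_eq_norm]
  calc ‖(r / (n+1)) • ∑ i ∈ Finset.range (n+1), f (a i) - ∫ s in (0:ℝ)..r, f s‖
      = ‖∑ i ∈ Finset.range (n+1), (h • f (a i) - ∫ s in (a i)..(a (i+1)), f s)‖ := by
        rw [Finset.sum_sub_distrib, ← hsum, hsplit]
  _ ≤ ∑ i ∈ Finset.range (n+1), ‖h • f (a i) - ∫ s in (a i)..(a (i+1)), f s‖ :=
        norm_sum_le _ _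
  _ ≤ ∑ _i ∈ Finset.range (n+1), (ε / (2*r)) * h :=
        Finset.sum_le_sum fun i hi => hdiff i (Finset.mem_range.1 hi)
  _ = ((n:ℝ)+1) * ((ε / (2*r)) * h) := by
        rw [Finset.sum_const, Finset.card_range, nsmul_eq_mul]; push_cast; ring
  _ = ε / 2 := by
        calc ((n:ℝ)+1) * ((ε / (2*r)) * h) = (ε / (2*r)) * (((n:ℝ)+1) * h) := by ring
        _ = (ε / (2*r)) * r := by rw [hr']
        _ = ε / 2 := by field_simp [ne_of_gt hr]
  _ < ε := by linarith

/-- `𝒯 t` commutes with the averaging integral. -/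
lemma aux_T_avg [CompleteSpace E] (h𝒯 : IsBiContSotSemigroup 𝒯) (C : E →L[ℝ] E)
    {r t : ℝ} (hr : 0 < r) (ht : 0 ≤ t) (x : E) :
    𝒯 t (avg h𝒯 C hr.le) x = ∫ s in (0:ℝ)..r, 𝒯 (t + s) C x := by
  obtain ⟨K, hK1, hK⟩ := aux_norm_bound h𝒯 r
  set R : ℕ → E →L[ℝ] E :=
    fun n => (r/(n+1)) • ∑ i ∈ Finset.range (n+1), 𝒯 ((i:ℝ) * (r/(n+1))) C with hR
  have hsi : ∀ n : ℕ, ∀ i ∈ Finset.range (n+1), ((i:ℝ) * (r/(n+1))) ∈ Icc (0:ℝ) r := by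
    intro n i hi
    have hi' : (i:ℝ) ≤ (n:ℝ) + 1 := by
      have := Finset.mem_range.1 hi
      exact_mod_cast Nat.le_of_lt_succ this |>.trans (Nat.le_succ n)
    constructor
    · positivity
    · calc (i:ℝ) * (r/(n+1)) ≤ ((n:ℝ)+1) * (r/(n+1)) := by
            apply mul_le_mul_of_nonneg_right hi' (by positivity)
      _ = r := by field_simp
  have hRb : ∀ n, ‖R n‖ ≤ r * K * ‖C‖ := by
    intro n
    simp only [hR]
    calc ‖(r/((n:ℝ)+1)) • ∑ i ∈ Finset.range (n+1), 𝒯 ((i:ℝ) * (r/(n+1))) C‖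
        = ‖(r/((n:ℝ)+1))‖ * ‖∑ i ∈ Finset.range (n+1), 𝒯 ((i:ℝ) * (r/(n+1))) C‖ :=
          norm_smul (r/((n:ℝ)+1)) (∑ i ∈ Finset.range (n+1), 𝒯 ((i:ℝ) * (r/(n+1))) C)
    _ = (r/((n:ℝ)+1)) * ‖∑ i ∈ Finset.range (n+1), 𝒯 ((i:ℝ) * (r/(n+1))) C‖ := by
          rw [Real.norm_eq_abs, abs_of_pos (by positivity)]
    _ ≤ (r/((n:ℝ)+1)) * ∑ i ∈ Finset.range (n+1), ‖𝒯 ((i:ℝ) * (r/(n+1))) C‖ := by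
          apply mul_le_mul_of_nonneg_left (norm_sum_le _ _) (by positivity)
    _ ≤ (r/((n:ℝ)+1)) * ∑ _i ∈ Finset.range (n+1), K * ‖C‖ := by
          apply mul_le_mul_of_nonneg_left _ (by positivity)
          apply Finset.sum_le_sum
          intro i hi
          calc ‖𝒯 ((i:ℝ) * (r/(n+1))) C‖ ≤ ‖𝒯 ((i:ℝ) * (r/(n+1)))‖ * ‖C‖ :=
                (𝒯 _).le_opNorm C
          _ ≤ K * ‖C‖ := mul_le_mul_of_nonneg_right (hK _ (hsi n i hi)) (norm_nonneg C)
    _ = r * K * ‖C‖ := by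
          rw [Finset.sum_const, Finset.card_range, nsmul_eq_mul]
          push_cast; field_simp
  have havgb : ‖avg h𝒯 C hr.le‖ ≤ r * K * ‖C‖ :=
    avg_norm_le h𝒯 C hr.le (by linarith) hK
  have hRx : ∀ y : E, Tendsto (fun n => R n y) atTop (𝓝 (avg h𝒯 C hr.le y)) := by
    intro y
    have hcont : ContinuousOn (fun s => 𝒯 s C y) (Icc 0 r) :=
      (h𝒯.strongCont C y).mono Icc_subset_Ici_self
    have := aux_riemann hr hcont
    rw [avg_apply]
    refine this.congr fun n => ?_
    simp only [hR, ContinuousLinearMap.smul_apply, ContinuousLinearMap.sum_apply]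
  have h1 : Tendsto (fun n => 𝒯 t (R n) x) atTop (𝓝 (𝒯 t (avg h𝒯 C hr.le) x)) := by
    refine aux_seq_lim h𝒯 (t₀ := t + 1) (by linarith) (c := r * K * ‖C‖ + r * K * ‖C‖)
      (Eventually.of_forall fun n => ?_)
      (fun y => tendsto_sub_nhds_zero_iff.2 (hRx y)) ht
      (Eventually.of_forall fun n => ⟨ht, by linarith⟩) tendsto_const_nhds x
    calc ‖R n - avg h𝒯 C hr.le‖ ≤ ‖R n‖ + ‖avg h𝒯 C hr.le‖ := norm_sub_le _ _
    _ ≤ r * K * ‖C‖ + r * K * ‖C‖ := add_le_add (hRb n) havgb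
  have h2 : Tendsto (fun n => 𝒯 t (R n) x) atTop (𝓝 (∫ s in (0:ℝ)..r, 𝒯 (t + s) C x)) := by
    have hg : ContinuousOn (fun s => 𝒯 (t+s) C x) (Icc 0 r) := by
      have hmaps : MapsTo (fun s : ℝ => t + s) (Icc 0 r) (Ici (0:ℝ)) := by
        intro s hs
        simp only [mem_Ici]
        linarith [hs.1]
      exact (h𝒯.strongCont C x).comp ((continuous_const.add continuous_id).continuousOn) hmaps
    have := aux_riemann hr hg
    refine this.congr fun n => ?_
    simp only [hR, map_smul, ContinuousLinearMap.smul_apply, map_sum,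
      ContinuousLinearMap.sum_apply]
    congr 1
    apply Finset.sum_congr rfl
    intro i hi
    rw [← aux_T_add h𝒯 ht (hsi n i hi).1 C]
  exact tendsto_nhds_unique h1 h2

/-- FTC-style lemma: right derivative of the integral. -/
lemma aux_deriv_int [CompleteSpace E] {f : ℝ → E} {a : ℝ}
    (hf : ContinuousOn f (Icc a (a+1)))
    (hi : ∀ t ∈ Ioc (0:ℝ) 1, IntervalIntegrable f MeasureTheory.volume a (a+t)) :
    Tendsto (fun t => t⁻¹ • ∫ s in a..(a+t), f s) (𝓝[>] (0:ℝ)) (𝓝 (f a)) := by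
  rw [Metric.tendsto_nhdsWithin_nhds]
  intro ε hε
  have hfa : ContinuousWithinAt f (Icc a (a+1)) a :=
    hf a (left_mem_Icc.2 (by linarith))
  rw [Metric.continuousWithinAt_iff] at hfa
  obtain ⟨δ₀, hδ₀, hδ₀'⟩ := hfa (ε/2) (by linarith)
  refine ⟨min δ₀ 1, by positivity, fun t ht hd => ?_⟩
  have htpos : 0 < t := ht
  rw [Real.dist_eq, sub_zero, abs_of_pos htpos] at hd
  have htδ : t < δ₀ := lt_of_lt_of_le hd (min_le_left _ _)
  have ht1 : t ≤ 1 := by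
    linarith [lt_of_lt_of_le hd (min_le_right _ _)]
  have hint := hi t ⟨htpos, ht1⟩
  have hconst : (t : ℝ) • f a = ∫ _ in a..(a+t), f a := by
    rw [intervalIntegral.integral_const]
    congr 1
    ring
  have key : (t⁻¹ • ∫ s in a..(a+t), f s) - f a
      = t⁻¹ • ∫ s in a..(a+t), (f s - f a) := by
    rw [intervalIntegral.integral_sub hint intervalIntegrable_const, smul_sub, ← hconst,
      smul_smul, inv_mul_cancel₀ (ne_of_gt htpos), one_smul]
  rw [dist_eq_norm, key, norm_smul, Real.norm_eq_abs, abs_of_pos (inv_pos.2 htpos)]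
  have hb : ∀ s ∈ uIoc a (a+t), ‖f s - f a‖ ≤ ε/2 := by
    intro s hs
    rw [uIoc_of_le (by linarith)] at hs
    have hsmem : s ∈ Icc a (a+1) := ⟨hs.1.le, by linarith [hs.2]⟩
    have hdist : dist s a < δ₀ := by
      rw [Real.dist_eq, abs_of_nonneg (by linarith [hs.1])]
      linarith [hs.2]
    have := hδ₀' hsmem hdist
    rw [dist_eq_norm] at this
    exact this.le
  calc t⁻¹ * ‖∫ s in a..(a+t), (f s - f a)‖ ≤ t⁻¹ * (ε/2 * |a + t - a|) := by
        apply mul_le_mul_of_nonneg_left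
          (intervalIntegral.norm_integral_le_of_norm_le_const hb) (inv_nonneg.2 htpos.le)
  _ = ε/2 := by
        rw [add_sub_cancel_left, abs_of_pos htpos]
        field_simp
  _ < ε := by linarith

/-- Averages lie in the domain of the generator. -/
lemma aux_genRel_avg [CompleteSpace E] (h𝒯 : IsBiContSotSemigroup 𝒯) (C : E →L[ℝ] E)
    {r : ℝ} (hr : 0 < r) :
    SotGenRel 𝒯 (avg h𝒯 C hr.le) (𝒯 r C - C) := by
  obtain ⟨K, hK1, hK⟩ := aux_norm_bound h𝒯 (r+1)
  have key : ∀ t : ℝ, 0 ≤ t → ∀ x : E,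
      𝒯 t (avg h𝒯 C hr.le) x - avg h𝒯 C hr.le x
        = (∫ s in r..(r+t), 𝒯 s C x) - ∫ s in (0:ℝ)..(0+t), 𝒯 s C x := by
    intro t ht x
    rw [aux_T_avg h𝒯 C hr ht x, avg_apply]
    have h1 : (∫ s in (0:ℝ)..r, 𝒯 (t+s) C x) = ∫ s in t..(t+r), 𝒯 s C x := by
      rw [intervalIntegral.integral_comp_add_left (fun s => 𝒯 s C x) t, add_zero]
    have I : ∀ a b : ℝ, 0 ≤ a → 0 ≤ b →
        IntervalIntegrable (fun s => 𝒯 s C x) MeasureTheory.volume a b :=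
      fun a b ha hb => aux_integrable h𝒯 C x ha hb
    have h2 : (∫ s in (0:ℝ)..t, 𝒯 s C x) + ∫ s in t..(t+r), 𝒯 s C x
        = ∫ s in (0:ℝ)..(t+r), 𝒯 s C x :=
      intervalIntegral.integral_add_adjacent_intervals (I 0 t le_rfl ht)
        (I t (t+r) ht (by linarith))
    have h3 : (∫ s in (0:ℝ)..r, 𝒯 s C x) + ∫ s in r..(t+r), 𝒯 s C x
        = ∫ s in (0:ℝ)..(t+r), 𝒯 s C x :=
      intervalIntegral.integral_add_adjacent_intervals (I 0 r le_rfl hr.le)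
        (I r (t+r) hr.le (by linarith))
    have e2 : (∫ s in t..(t+r), 𝒯 s C x)
        = (∫ s in (0:ℝ)..(t+r), 𝒯 s C x) - ∫ s in (0:ℝ)..t, 𝒯 s C x :=
      eq_sub_of_add_eq' h2
    have e3 : (∫ s in r..(t+r), 𝒯 s C x)
        = (∫ s in (0:ℝ)..(t+r), 𝒯 s C x) - ∫ s in (0:ℝ)..r, 𝒯 s C x :=
      eq_sub_of_add_eq' h3
    rw [h1, e2]
    have : r + t = t + r := by ring
    rw [this, e3, zero_add]
    abel
  constructor
  · intro x
    have hF : ContinuousOn (fun s => 𝒯 s C x) (Ici 0) := h𝒯.strongCont C x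
    have l1 : Tendsto (fun t => t⁻¹ • ∫ s in r..(r+t), 𝒯 s C x) (𝓝[>] (0:ℝ))
        (𝓝 (𝒯 r C x)) := by
      apply aux_deriv_int (hF.mono fun s hs => by
        simp only [mem_Ici]; linarith [hs.1, hr])
      intro t ht
      exact aux_integrable h𝒯 C x hr.le (by linarith [ht.1])
    have l2 : Tendsto (fun t => t⁻¹ • ∫ s in (0:ℝ)..(0+t), 𝒯 s C x) (𝓝[>] (0:ℝ))
        (𝓝 (C x)) := by
      have h0 : 𝒯 (0:ℝ) C x = C x := by rw [h𝒯.map_zero]; rfl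
      rw [← h0]
      apply aux_deriv_int (hF.mono fun s hs => by simp only [mem_Ici]; linarith [hs.1])
      intro t ht
      exact aux_integrable h𝒯 C x le_rfl (by linarith [ht.1])
    have l3 := l1.sub l2
    have htarget : (𝒯 r C - C) x = 𝒯 r C x - C x := rfl
    rw [htarget]
    refine l3.congr' ?_
    filter_upwards [self_mem_nhdsWithin] with t (ht : t ∈ Ioi 0)
    rw [key t (le_of_lt ht) x, smul_sub]
  · refine ⟨2 * (K * ‖C‖), fun t ht => ?_⟩
    have hKC : 0 ≤ K * ‖C‖ := mul_nonneg (by linarith) (norm_nonneg C)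
    apply ContinuousLinearMap.opNorm_le_bound _ (by nlinarith [ht.1])
    intro x
    rw [ContinuousLinearMap.sub_apply, key t ht.1.le x]
    have hball : ∀ a b : ℝ, 0 ≤ a → b = a + t → (∀ s ∈ uIoc a b, s ∈ Icc (0:ℝ) (r+1)) →
        ‖∫ s in a..b, 𝒯 s C x‖ ≤ K * ‖C‖ * ‖x‖ * t := by
      intro a b ha hb hmem
      have hbnd : ∀ s ∈ uIoc a b, ‖𝒯 s C x‖ ≤ K * ‖C‖ * ‖x‖ := by
        intro s hs
        calc ‖𝒯 s C x‖ ≤ ‖𝒯 s C‖ * ‖x‖ := (𝒯 s C).le_opNorm x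
        _ ≤ (‖𝒯 s‖ * ‖C‖) * ‖x‖ :=
            mul_le_mul_of_nonneg_right ((𝒯 s).le_opNorm C) (norm_nonneg x)
        _ ≤ K * ‖C‖ * ‖x‖ := by
            gcongr
            exact hK s (hmem s hs)
      calc ‖∫ s in a..b, 𝒯 s C x‖ ≤ K * ‖C‖ * ‖x‖ * |b - a| :=
            intervalIntegral.norm_integral_le_of_norm_le_const hbnd
      _ = K * ‖C‖ * ‖x‖ * t := by rw [hb, add_sub_cancel_left, abs_of_pos ht.1]
    have b1 := hball r (r+t) hr.le rfl (by
      intro s hs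
      rw [uIoc_of_le (by linarith [ht.1])] at hs
      exact ⟨by linarith [hs.1, hr], by linarith [hs.2, ht.2]⟩)
    have b2 := hball 0 (0+t) le_rfl rfl (by
      intro s hs
      rw [uIoc_of_le (by linarith [ht.1])] at hs
      have h01 : s ≤ t := by linarith [hs.2]
      exact ⟨hs.1.le, by linarith [ht.2, hr]⟩)
    calc ‖(∫ s in r..(r+t), 𝒯 s C x) - ∫ s in (0:ℝ)..(0+t), 𝒯 s C x‖
        ≤ ‖∫ s in r..(r+t), 𝒯 s C x‖ + ‖∫ s in (0:ℝ)..(0+t), 𝒯 s C x‖ := norm_sub_le _ _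
    _ ≤ K * ‖C‖ * ‖x‖ * t + K * ‖C‖ * ‖x‖ * t := add_le_add b1 b2
    _ = 2 * (K * ‖C‖) * t * ‖x‖ := by ring

/-- Key identity: on the domain of the generator, `𝒯 t (C ∘ B) = (𝒯 t C) ∘ B`. -/
lemma aux_key_ident [CompleteSpace E] (h𝒯 : IsBiContSotSemigroup 𝒯)
    (H : ∀ (C Y : E →L[ℝ] E), SotGenRel 𝒯 C Y →
      ∀ B : E →L[ℝ] E, SotGenRel 𝒯 (C.comp B) (Y.comp B))
    {C Y : E →L[ℝ] E} (hC : SotGenRel 𝒯 C Y) (B : E →L[ℝ] E) {t : ℝ} (ht : 0 ≤ t) :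
    𝒯 t (C.comp B) = (𝒯 t C).comp B := by
  rcases eq_or_lt_of_le ht with rfl | htpos
  · rw [h𝒯.map_zero]; rfl
  ext x
  obtain ⟨K, hK1, hK⟩ := aux_norm_bound h𝒯 t
  set G : ℝ → (E →L[ℝ] E) := fun s => (𝒯 s C).comp B with hGdef
  set g : ℝ → E := fun s => 𝒯 (t - s) (G s) x with hgdef
  have hGb : ∀ s ∈ Icc (0:ℝ) t, ‖G s‖ ≤ K * ‖C‖ * ‖B‖ := by
    intro s hs
    simp only [hGdef]
    calc ‖(𝒯 s C).comp B‖ ≤ ‖𝒯 s C‖ * ‖B‖ := ContinuousLinearMap.opNorm_comp_le _ _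
    _ ≤ (‖𝒯 s‖ * ‖C‖) * ‖B‖ := by gcongr; exact (𝒯 s).le_opNorm C
    _ ≤ K * ‖C‖ * ‖B‖ := by gcongr; exact hK s hs
  have hgcont : ContinuousOn g (Icc 0 t) := by
    intro s hs
    have hgoal : Tendsto g (𝓝[Icc 0 t] s) (𝓝 (g s)) := by
      rw [tendsto_iff_seq_tendsto]
      intro u hu
      have hu1 : Tendsto u atTop (𝓝 s) := hu.mono_right nhdsWithin_le_nhds
      have hu2 : ∀ᶠ n in atTop, u n ∈ Icc (0:ℝ) t := (tendsto_nhdsWithin_iff.1 hu).2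
      have hmain : Tendsto (fun n => 𝒯 (t - u n) (G (u n)) x) atTop
          (𝓝 (𝒯 (t - s) (G s) x)) := by
        refine aux_seq_lim h𝒯 (t₀ := t) htpos
          (c := K * ‖C‖ * ‖B‖ + K * ‖C‖ * ‖B‖) ?_ ?_
          (by linarith [hs.2]) ?_ ?_ x
        · filter_upwards [hu2] with n hn
          calc ‖G (u n) - G s‖ ≤ ‖G (u n)‖ + ‖G s‖ := norm_sub_le _ _
          _ ≤ _ := add_le_add (hGb _ hn) (hGb s hs)
        · intro y
          have h3 : Tendsto (fun n => 𝒯 (u n) C (B y)) atTop (𝓝 (𝒯 s C (B y))) :=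
            aux_time_cont h𝒯 C (B y) hs.1 (hu2.mono fun n hn => hn.1) hu1
          exact tendsto_sub_nhds_zero_iff.2 h3
        · filter_upwards [hu2] with n hn
          exact ⟨by linarith [hn.2], by linarith [hn.1]⟩
        · exact tendsto_const_nhds.sub hu1
      exact hmain
    exact hgoal
  have hgderiv : ∀ s ∈ Ico (0:ℝ) t, HasDerivWithinAt g 0 (Ici s) s := by
    intro s hs
    rw [hasDerivWithinAt_iff_tendsto_slope, Ici_sdiff_left]
    rw [tendsto_iff_seq_tendsto]
    intro u hu
    have hu1 : Tendsto u atTop (𝓝 s) := hu.mono_right nhdsWithin_le_nhds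
    have hu2 : ∀ᶠ n in atTop, u n ∈ Ioi s := (tendsto_nhdsWithin_iff.1 hu).2
    have hult : ∀ᶠ n in atTop, u n < t := hu1.eventually_lt_const hs.2
    have hule1 : ∀ᶠ n in atTop, u n - s ≤ 1 := by
      have h4 := hu1.eventually_lt_const (show s < s + 1 by linarith)
      filter_upwards [h4] with n hn; linarith
    set D : E →L[ℝ] E := 𝒯 s C with hDdef
    have hDgen : SotGenRel 𝒯 D (𝒯 s Y) := aux_genRel_orbit h𝒯 hC hs.1
    have hDBgen : SotGenRel 𝒯 (D.comp B) ((𝒯 s Y).comp B) := H _ _ hDgen B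
    obtain ⟨M₁, hM₁⟩ := aux_quot_bound hDgen
    obtain ⟨M₂, hM₂⟩ := aux_quot_bound hDBgen
    set A : ℕ → (E →L[ℝ] E) := fun n =>
      ((u n - s)⁻¹ • (𝒯 (u n - s) D - D)).comp B
        - (u n - s)⁻¹ • (𝒯 (u n - s) (D.comp B) - D.comp B) with hAdef
    have hν : Tendsto (fun n => u n - s) atTop (𝓝[>] (0:ℝ)) := by
      apply tendsto_nhdsWithin_iff.2
      constructor
      · have h5 := hu1.sub_const s
        simpa using h5
      · filter_upwards [hu2] with n hn
        exact sub_pos.2 (mem_Ioi.1 hn)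
    have hmemν : ∀ᶠ n in atTop, u n - s ∈ Ioc (0:ℝ) 1 := by
      filter_upwards [hu2, hule1] with n h1 h2
      exact ⟨sub_pos.2 h1, h2⟩
    have hbound : ∀ᶠ n in atTop, ‖A n - 0‖ ≤ M₁ * ‖B‖ + M₂ := by
      filter_upwards [hmemν] with n hn
      rw [sub_zero]
      calc ‖A n‖ ≤ ‖((u n - s)⁻¹ • (𝒯 (u n - s) D - D)).comp B‖
          + ‖(u n - s)⁻¹ • (𝒯 (u n - s) (D.comp B) - D.comp B)‖ := by
            simp only [hAdef]; exact norm_sub_le _ _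
      _ ≤ M₁ * ‖B‖ + M₂ := by
          apply add_le_add
          · calc ‖((u n - s)⁻¹ • (𝒯 (u n - s) D - D)).comp B‖
                ≤ ‖(u n - s)⁻¹ • (𝒯 (u n - s) D - D)‖ * ‖B‖ :=
                  ContinuousLinearMap.opNorm_comp_le _ _
            _ ≤ M₁ * ‖B‖ :=
                  mul_le_mul_of_nonneg_right (hM₁ _ hn) (norm_nonneg B)
          · exact hM₂ _ hn
    have hnull : ∀ y : E, Tendsto (fun n => A n y - (0 : E →L[ℝ] E) y) atTop (𝓝 0) := by
      intro y
      have l1 : Tendsto (fun n => (u n - s)⁻¹ • (𝒯 (u n - s) D (B y) - D (B y))) atTop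
          (𝓝 (𝒯 s Y (B y))) := (hDgen.1 (B y)).comp hν
      have l2 : Tendsto (fun n => (u n - s)⁻¹ • (𝒯 (u n - s) (D.comp B) y - (D.comp B) y))
          atTop (𝓝 ((𝒯 s Y).comp B y)) := (hDBgen.1 y).comp hν
      have l3 := l1.sub l2
      rw [show (𝒯 s Y) (B y) = (𝒯 s Y).comp B y from rfl, sub_self] at l3
      refine l3.congr fun n => ?_
      simp only [hAdef, ContinuousLinearMap.sub_apply, ContinuousLinearMap.zero_apply,
        ContinuousLinearMap.comp_apply, ContinuousLinearMap.smul_apply, sub_zero,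
        smul_sub]
    have hτmem : ∀ᶠ n in atTop, t - u n ∈ Icc (0:ℝ) t := by
      filter_upwards [hu2, hult] with n h1 h2
      exact ⟨by linarith, by linarith [mem_Ioi.1 h1, hs.1]⟩
    have hτlim : Tendsto (fun n => t - u n) atTop (𝓝 (t - s)) := tendsto_const_nhds.sub hu1
    have hmain : Tendsto (fun n => 𝒯 (t - u n) (A n) x) atTop
        (𝓝 (𝒯 (t - s) (0 : E →L[ℝ] E) x)) :=
      aux_seq_lim h𝒯 htpos hbound hnull (by linarith [hs.2]) hτmem hτlim x
    rw [map_zero, ContinuousLinearMap.zero_apply] at hmain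
    refine hmain.congr' ?_
    filter_upwards [hu2, hult] with n hn1 hn2
    have hνpos : (0:ℝ) < u n - s := sub_pos.2 hn1
    have htu : (0:ℝ) ≤ t - u n := by linarith
    have e1 : 𝒯 (u n) C = 𝒯 (u n - s) D := by
      rw [hDdef, ← aux_T_add h𝒯 (le_of_lt hνpos) hs.1, sub_add_cancel]
    have e2 : g s = 𝒯 (t - u n) (𝒯 (u n - s) (D.comp B)) x := by
      simp only [hgdef]
      rw [show t - s = (t - u n) + (u n - s) by ring, aux_T_add h𝒯 htu (le_of_lt hνpos)]
    have e3 : A n = (u n - s)⁻¹ • ((𝒯 (u n - s) D).comp B - 𝒯 (u n - s) (D.comp B)) := by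
      simp only [hAdef, ContinuousLinearMap.smul_comp, ContinuousLinearMap.sub_comp,
        smul_sub]
      abel
    have e4 : g (u n) = 𝒯 (t - u n) ((𝒯 (u n - s) D).comp B) x := by
      simp only [hgdef, hGdef, e1]
    show 𝒯 (t - u n) (A n) x = slope g s (u n)
    rw [slope_def_module, e3, e4, e2, map_smul, ContinuousLinearMap.smul_apply,
      map_sub, ContinuousLinearMap.sub_apply]
  have hconst := constant_of_has_deriv_right_zero hgcont hgderiv t (right_mem_Icc.2 ht)
  have h1 : g t = (𝒯 t C) (B x) := by
    simp only [hgdef, hGdef, sub_self, h𝒯.map_zero, ContinuousLinearMap.one_apply,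
      ContinuousLinearMap.comp_apply]
  have h2 : g 0 = 𝒯 t (C.comp B) x := by
    have hG0 : G 0 = C.comp B := by
      simp only [hGdef, h𝒯.map_zero, ContinuousLinearMap.one_apply]
    simp only [hgdef, sub_zero, hG0]
  show 𝒯 t (C.comp B) x = (𝒯 t C) (B x)
  rw [← h2, ← h1, hconst]

/-- The normalized averages of the identity converge strongly to the identity. -/
lemma aux_impl [CompleteSpace E] (h𝒯 : IsBiContSotSemigroup 𝒯)
    (H : ∀ (C Y : E →L[ℝ] E), SotGenRel 𝒯 C Y →
      ∀ B : E →L[ℝ] E, SotGenRel 𝒯 (C.comp B) (Y.comp B))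
    {t : ℝ} (ht : 0 ≤ t) (B : E →L[ℝ] E) :
    𝒯 t B = (𝒯 t 1).comp B := by
  ext x
  obtain ⟨K, hK1, hK⟩ := aux_norm_bound h𝒯 1
  have hrpos : ∀ n : ℕ, (0:ℝ) < 1/((n:ℝ)+1) := fun n => by positivity
  have hrle1 : ∀ n : ℕ, 1/((n:ℝ)+1) ≤ 1 := by
    intro n
    rw [div_le_one (by positivity)]
    have : (0:ℝ) ≤ (n:ℝ) := Nat.cast_nonneg n
    linarith
  set Cn : ℕ → (E →L[ℝ] E) := fun n => ((n:ℝ)+1) • avg h𝒯 1 (hrpos n).le with hCn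
  have hCb : ∀ n, ‖Cn n‖ ≤ K := by
    intro n
    simp only [hCn]
    have havg : ‖avg h𝒯 (1 : E →L[ℝ] E) (hrpos n).le‖
        ≤ (1/((n:ℝ)+1)) * K * ‖(1 : E →L[ℝ] E)‖ :=
      avg_norm_le h𝒯 1 (hrpos n).le (by linarith)
        (fun s hs => hK s ⟨hs.1, le_trans hs.2 (hrle1 n)⟩)
    have hid1 : ‖(1 : E →L[ℝ] E)‖ ≤ 1 := by
      rw [ContinuousLinearMap.one_def]
      exact ContinuousLinearMap.norm_id_le
    have hKpos : (0:ℝ) ≤ (1/((n:ℝ)+1)) * K := by positivity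
    have havg2 : ‖avg h𝒯 (1 : E →L[ℝ] E) (hrpos n).le‖ ≤ (1/((n:ℝ)+1)) * K := by
      refine le_trans havg ?_
      calc (1/((n:ℝ)+1)) * K * ‖(1 : E →L[ℝ] E)‖
          = ((1/((n:ℝ)+1)) * K) * ‖(1 : E →L[ℝ] E)‖ := by ring
      _ ≤ ((1/((n:ℝ)+1)) * K) * 1 := mul_le_mul_of_nonneg_left hid1 hKpos
      _ = (1/((n:ℝ)+1)) * K := mul_one _
    have e : ‖((n:ℝ)+1) • avg h𝒯 (1 : E →L[ℝ] E) (hrpos n).le‖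
        = ((n:ℝ)+1) * ‖avg h𝒯 (1 : E →L[ℝ] E) (hrpos n).le‖ := by
      rw [norm_smul ((n:ℝ)+1) (avg h𝒯 (1 : E →L[ℝ] E) (hrpos n).le), Real.norm_eq_abs,
        abs_of_pos (by positivity)]
    rw [e]
    calc ((n:ℝ)+1) * ‖avg h𝒯 (1 : E →L[ℝ] E) (hrpos n).le‖
        ≤ ((n:ℝ)+1) * ((1/((n:ℝ)+1)) * K) :=
          mul_le_mul_of_nonneg_left havg2 (by positivity)
    _ = K := by field_simp
  have hCy : ∀ y : E, Tendsto (fun n => Cn n y) atTop (𝓝 y) := by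
    intro y
    have hf : ContinuousOn (fun s => 𝒯 s (1 : E →L[ℝ] E) y) (Icc 0 (0+1)) :=
      (h𝒯.strongCont 1 y).mono (by rw [zero_add]; exact Icc_subset_Ici_self)
    have hder := aux_deriv_int (a := (0:ℝ)) hf
      (fun τ hτ => aux_integrable h𝒯 1 y le_rfl (by linarith [hτ.1.le]))
    have hf0 : 𝒯 (0:ℝ) (1 : E →L[ℝ] E) y = y := by rw [h𝒯.map_zero]; rfl
    rw [hf0] at hder
    have hseq : Tendsto (fun n : ℕ => 1/((n:ℝ)+1)) atTop (𝓝[>] (0:ℝ)) :=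
      tendsto_nhdsWithin_iff.2 ⟨tendsto_one_div_add_atTop_nhds_zero_nat,
        Eventually.of_forall fun n => hrpos n⟩
    have hcomp := hder.comp hseq
    refine hcomp.congr fun n => ?_
    simp only [Function.comp, hCn, ContinuousLinearMap.smul_apply, avg_apply]
    rw [zero_add, one_div, inv_inv]
  have hgen : ∀ n, SotGenRel 𝒯 (Cn n)
      (((n:ℝ)+1) • (𝒯 (1/((n:ℝ)+1)) 1 - 1)) := fun n =>
    aux_genRel_smul (aux_genRel_avg h𝒯 1 (hrpos n)) _
  have hid : ∀ n, 𝒯 t ((Cn n).comp B) = (𝒯 t (Cn n)).comp B := fun n =>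
    aux_key_ident h𝒯 H (hgen n) B ht
  have h1 : Tendsto (fun n => 𝒯 t ((Cn n).comp B) x) atTop (𝓝 (𝒯 t B x)) := by
    refine aux_seq_lim h𝒯 (t₀ := t+1) (by linarith) (c := K * ‖B‖ + ‖B‖)
      (Eventually.of_forall fun n => ?_) (fun y => ?_) ht
      (Eventually.of_forall fun n => ⟨ht, by linarith⟩) tendsto_const_nhds x
    · calc ‖(Cn n).comp B - B‖ ≤ ‖(Cn n).comp B‖ + ‖B‖ := norm_sub_le _ _
      _ ≤ K * ‖B‖ + ‖B‖ := by
          apply add_le_add _ le_rfl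
          calc ‖(Cn n).comp B‖ ≤ ‖Cn n‖ * ‖B‖ := ContinuousLinearMap.opNorm_comp_le _ _
          _ ≤ K * ‖B‖ := mul_le_mul_of_nonneg_right (hCb n) (norm_nonneg B)
    · have h3 : Tendsto (fun n => Cn n (B y)) atTop (𝓝 (B y)) := hCy (B y)
      exact tendsto_sub_nhds_zero_iff.2 h3
  have h2 : Tendsto (fun n => 𝒯 t (Cn n) (B x)) atTop (𝓝 (𝒯 t (1 : E →L[ℝ] E) (B x))) := by
    refine aux_seq_lim h𝒯 (t₀ := t+1) (by linarith) (c := K + 1)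
      (Eventually.of_forall fun n => ?_) (fun y => ?_) ht
      (Eventually.of_forall fun n => ⟨ht, by linarith⟩) tendsto_const_nhds (B x)
    · have hid1 : ‖(1 : E →L[ℝ] E)‖ ≤ 1 := by
        rw [ContinuousLinearMap.one_def]
        exact ContinuousLinearMap.norm_id_le
      calc ‖Cn n - 1‖ ≤ ‖Cn n‖ + ‖(1 : E →L[ℝ] E)‖ := norm_sub_le _ _
      _ ≤ K + 1 := add_le_add (hCb n) hid1
    · have h3 : Tendsto (fun n => Cn n y) atTop (𝓝 y) := hCy y
      have h4 : (1 : E →L[ℝ] E) y = y := rfl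
      rw [h4]
      exact tendsto_sub_nhds_zero_iff.2 h3
  have heq : ∀ n, 𝒯 t ((Cn n).comp B) x = 𝒯 t (Cn n) (B x) := fun n => by
    rw [hid n]; rfl
  have hfinal := tendsto_nhds_unique (h1.congr heq) h2
  show 𝒯 t B x = (𝒯 t 1) (B x)
  exact hfinal

/-- The easy direction: implemented semigroups have right-module generators. -/
lemma aux_easy (h𝒯 : IsBiContSotSemigroup 𝒯) {S : ℝ → E →L[ℝ] E}
    (hS : ∀ t : ℝ, 0 ≤ t → ∀ C : E →L[ℝ] E, 𝒯 t C = (S t).comp C) :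
    ∀ (C Y : E →L[ℝ] E), SotGenRel 𝒯 C Y →
      ∀ B : E →L[ℝ] E, SotGenRel 𝒯 (C.comp B) (Y.comp B) := by
  intro C Y hCY B
  constructor
  · intro x
    have h1 := hCY.1 (B x)
    have h2 : (Y.comp B) x = Y (B x) := rfl
    rw [h2]
    refine h1.congr' ?_
    filter_upwards [self_mem_nhdsWithin] with τ (hτ : τ ∈ Ioi (0:ℝ))
    congr 1
    rw [hS τ (le_of_lt hτ) (C.comp B), hS τ (le_of_lt hτ) C]
    rfl
  · obtain ⟨M, hM⟩ := hCY.2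
    refine ⟨M * ‖B‖, fun τ hτ => ?_⟩
    have h3 : 𝒯 τ (C.comp B) - C.comp B = (𝒯 τ C - C).comp B := by
      rw [ContinuousLinearMap.sub_comp, hS τ hτ.1.le (C.comp B), hS τ hτ.1.le C,
        ContinuousLinearMap.comp_assoc]
    rw [h3]
    calc ‖(𝒯 τ C - C).comp B‖ ≤ ‖𝒯 τ C - C‖ * ‖B‖ := ContinuousLinearMap.opNorm_comp_le _ _
    _ ≤ (M * τ) * ‖B‖ := mul_le_mul_of_nonneg_right (hM τ hτ) (norm_nonneg B)
    _ = M * ‖B‖ * τ := by ring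

end Aux

/-- For a `τ_sot`-bi-continuous semigroup `𝒯` on `𝓛(E)` with generator `𝒜`:
`dom 𝒜` is a right ideal and `𝒜` a right `𝓛(E)`-module homomorphism iff `𝒯` is left
implemented by a `C₀`-semigroup `S` on `E`; and in that case `S(t) = 𝒯(t)(Id)`. -/
theorem stmt_5 [CompleteSpace E]
    (𝒯 : ℝ → (E →L[ℝ] E) →L[ℝ] (E →L[ℝ] E)) (h𝒯 : IsBiContSotSemigroup 𝒯) :
    ((∀ (C Y : E →L[ℝ] E), SotGenRel 𝒯 C Y →
        ∀ B : E →L[ℝ] E, SotGenRel 𝒯 (C.comp B) (Y.comp B)) ↔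
      (∃ S : ℝ → E →L[ℝ] E, IsC0Semigroup S ∧
        ∀ t : ℝ, 0 ≤ t → ∀ C : E →L[ℝ] E, 𝒯 t C = (S t).comp C)) ∧
    ∀ S : ℝ → E →L[ℝ] E, IsC0Semigroup S →
      (∀ t : ℝ, 0 ≤ t → ∀ C : E →L[ℝ] E, 𝒯 t C = (S t).comp C) →
      ∀ t : ℝ, 0 ≤ t → S t = 𝒯 t 1 := by
  constructor
  · constructor
    · intro H
      refine ⟨fun t => 𝒯 t 1, ⟨?_, ?_, ?_⟩, ?_⟩
      · rw [h𝒯.map_zero]; rfl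
      · intro s t hs ht
        rw [aux_T_add h𝒯 hs ht 1]
        exact aux_impl h𝒯 H hs (𝒯 t 1)
      · exact fun x => h𝒯.strongCont 1 x
      · intro t ht C
        exact aux_impl h𝒯 H ht C
    · rintro ⟨S, _, hS⟩
      exact aux_easy h𝒯 hS
  · intro S hS0 hS t ht
    have h1 := hS t ht 1
    rw [h1]
    ext x
    rfl
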